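/- Let G be a finite group of odd order and let ρ be a representation of G on a finite-dimensional real vector space V that has no trivial components, i.e. the subspace of G-fixed vectors {v ∈ V | ρ(g)v = v for all g ∈ G} is zero. Then the dimension of V over ℝ is even. -/

import Mathlib

open Matrix Polynomial

/-- The trace of a real matrix of finite order is an algebraic integer (viewed in `ℂ`). -/
lemma trace_isIntegral_of_pow_eq_one {d : ℕ} (A : Matrix (Fin d) (Fin d) ℝ)
    {N : ℕ} (hN : N ≠ 0) (hA : A ^ N = 1) :
    IsIntegral ℤ ((A.trace : ℝ) : ℂ) := by
  classical
  set B : Matrix (Fin d) (Fin d) ℂ := (algebraMap ℝ ℂ).mapMatrix A with hB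
  have hBN : B ^ N = 1 := by rw [hB, ← _root_.map_pow, hA, _root_.map_one]
  have htr : ((A.trace : ℝ) : ℂ) = B.trace := by
    simp [hB, Matrix.trace, Matrix.diag, RingHom.mapMatrix_apply, Matrix.map_apply]
  rw [htr, Matrix.trace_eq_sum_roots_charpoly]
  have hroots : ∀ μ ∈ B.charpoly.roots, IsIntegral ℤ μ := by
    intro μ hμ
    have hroot : B.charpoly.IsRoot μ := (Polynomial.mem_roots'.mp hμ).2
    have hdet : (Matrix.scalar (Fin d) μ - B).det = 0 := by
      have h := hroot
      rw [Polynomial.IsRoot, Matrix.charpoly, _root_.eval_det,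
        matPolyEquiv_charmatrix] at h
      simpa using h
    obtain ⟨v, hv, hmul⟩ := (Matrix.exists_mulVec_eq_zero_iff).mpr hdet
    have hBv : B *ᵥ v = μ • v := by
      rw [Matrix.sub_mulVec] at hmul
      have h2 : Matrix.scalar (Fin d) μ *ᵥ v = μ • v := by
        rw [Matrix.scalar_apply, ← Matrix.smul_one_eq_diagonal,
          Matrix.smul_mulVec, Matrix.one_mulVec]
      rw [h2, sub_eq_zero] at hmul
      exact hmul.symm
    have hpow : ∀ k : ℕ, (B ^ k) *ᵥ v = μ ^ k • v := by
      intro k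
      induction k with
      | zero => simp
      | succ k ih =>
        rw [pow_succ', ← Matrix.mulVec_mulVec, ih, Matrix.mulVec_smul, hBv,
          smul_smul, ← pow_succ]
    have hμN : μ ^ N = 1 := by
      have hv' : v = μ ^ N • v := by
        have := hpow N
        rwa [hBN, Matrix.one_mulVec] at this
      by_contra hne
      apply hv
      have : (μ ^ N - 1) • v = 0 := by
        rw [sub_smul, one_smul, ← hv', sub_self]
      have hc : μ ^ N - 1 ≠ 0 := sub_ne_zero.mpr hne
      funext i
      have := congrFun this i
      simpa [hc] using this
    exact ⟨X ^ N - C 1, Polynomial.monic_X_pow_sub_C 1 hN, by simp [hμN]⟩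
  have : B.charpoly.roots.sum ∈ integralClosure ℤ ℂ :=
    Subalgebra.multiset_sum_mem _ (fun μ hμ => hroots μ hμ)
  exact this

/-- Sum over an inversion-closed, fixed-point-free finset of a symmetric integral function
is twice an algebraic integer. -/
lemma sum_eq_two_mul_integral {G : Type*} [Group G] [DecidableEq G] (f : G → ℂ)
    (hsym : ∀ g : G, f g⁻¹ = f g) (hint : ∀ g : G, IsIntegral ℤ (f g)) :
    ∀ s : Finset G, (∀ g ∈ s, g⁻¹ ∈ s) → (∀ g ∈ s, g⁻¹ ≠ g) →
      ∃ c : ℂ, IsIntegral ℤ c ∧ ∑ g ∈ s, f g = 2 * c := by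
  intro s
  induction s using Finset.strongInduction with
  | _ s ih =>
    intro hcl hnf
    rcases s.eq_empty_or_nonempty with rfl | ⟨a, ha⟩
    · exact ⟨0, isIntegral_zero, by simp⟩
    · have hainv : a⁻¹ ∈ s := hcl a ha
      have hane : a⁻¹ ≠ a := hnf a ha
      set t : Finset G := (s.erase a).erase a⁻¹ with ht
      have htsub : t ⊂ s :=
        lt_of_le_of_lt (Finset.erase_subset _ _) (Finset.erase_ssubset ha)
      have hclt : ∀ g ∈ t, g⁻¹ ∈ t := by
        intro g hg
        simp only [ht, Finset.mem_erase] at hg ⊢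
        exact ⟨fun h => hg.2.1 (inv_injective h),
          fun h => hg.1 (by rw [← h, inv_inv]), hcl g hg.2.2⟩
      have hnft : ∀ g ∈ t, g⁻¹ ≠ g := fun g hg =>
        hnf g (Finset.mem_of_mem_erase (Finset.mem_of_mem_erase hg))
      obtain ⟨c, hc, hsum⟩ := ih t htsub hclt hnft
      refine ⟨f a + c, (hint a).add hc, ?_⟩
      have h1 : a⁻¹ ∈ s.erase a := Finset.mem_erase.mpr ⟨hane, hainv⟩
      have e1 : f a + ∑ g ∈ s.erase a, f g = ∑ g ∈ s, f g :=
        Finset.add_sum_erase _ _ ha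
      have e2 : f a⁻¹ + ∑ g ∈ t, f g = ∑ g ∈ s.erase a, f g :=
        Finset.add_sum_erase _ _ h1
      rw [← e1, ← e2, hsum, hsym a]
      ring

/-- A real representation without trivial components of a finite group of odd
order has even dimension. -/
theorem odd_order_rep_no_trivial_component_even_dim
    {G : Type*} [Group G] [Fintype G] (hG : Odd (Fintype.card G))
    {V : Type*} [AddCommGroup V] [Module ℝ V] [FiniteDimensional ℝ V]
    (ρ : Representation ℝ G V)
    (hno : ∀ v : V, (∀ g : G, ρ g v = v) → v = 0) :
    Even (Module.finrank ℝ V) := by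
  classical
  set n := Module.finrank ℝ V with hn
  let b := Module.finBasis ℝ V
  set M : G → Matrix (Fin n) (Fin n) ℝ := fun g => LinearMap.toMatrix b b (ρ g) with hM
  have hM1 : M 1 = 1 := by
    simp only [hM]
    rw [_root_.map_one, LinearMap.toMatrix_one]
  have hMmul : ∀ g h : G, M (g * h) = M g * M h := by
    intro g h
    simp only [hM]
    rw [_root_.map_mul, LinearMap.toMatrix_mul]
  have hMpow : ∀ (g : G) (k : ℕ), M (g ^ k) = (M g) ^ k := by
    intro g k
    induction k with
    | zero => simpa using hM1
    | succ k ih => rw [pow_succ, pow_succ, ← ih, ← hMmul]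
  -- Step 1: the sum of all ρ g is zero
  have hT : (∑ g : G, ρ g) = 0 := by
    ext v
    simp only [LinearMap.coe_sum, Finset.sum_apply, LinearMap.zero_apply]
    apply hno
    intro h
    rw [map_sum]
    refine Fintype.sum_bijective (fun g => h * g) (Group.mulLeft_bijective h) _ _ ?_
    intro g
    rw [← Module.End.mul_apply, ← _root_.map_mul]
  -- trace version
  have htrsum : ∑ g : G, (M g).trace = 0 := by
    have : ∑ g : G, (M g).trace = ∑ g : G, LinearMap.trace ℝ V (ρ g) := by
      refine Finset.sum_congr rfl fun g _ => ?_
      rw [LinearMap.trace_eq_matrix_trace ℝ b]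
    rw [this, ← map_sum, hT, map_zero]
  -- Step 2: invariant positive definite form, giving trace symmetry
  set P : Matrix (Fin n) (Fin n) ℝ := ∑ h : G, (M h)ᴴ * M h with hP
  have hPinv2 : ∀ g : G, (M g)ᴴ * P * M g = P := by
    intro g
    have : (M g)ᴴ * P * M g = ∑ h : G, (M (h * g))ᴴ * M (h * g) := by
      rw [hP, Finset.mul_sum, Finset.sum_mul]
      refine Finset.sum_congr rfl fun h _ => ?_
      rw [hMmul, conjTranspose_mul]
      simp only [Matrix.mul_assoc]
    rw [this, hP]
    exact Fintype.sum_bijective (fun h => h * g) (Group.mulRight_bijective g) _ _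
      (fun h => rfl)
  have hPdef : P.PosDef := by
    have hsplit : P = (M 1)ᴴ * M 1 + ∑ h ∈ Finset.univ.erase 1, (M h)ᴴ * M h := by
      rw [hP]
      exact (Finset.add_sum_erase _ (fun h => (M h)ᴴ * M h) (Finset.mem_univ 1)).symm
    have hrest : (∑ h ∈ Finset.univ.erase 1, (M h)ᴴ * M h).PosSemidef := by
      refine Finset.sum_induction _ _ (fun a b ha hb => ha.add hb)
        Matrix.PosSemidef.zero (fun h _ => Matrix.posSemidef_conjTranspose_mul_self _)
    have h1 : ((M 1)ᴴ * M 1 : Matrix (Fin n) (Fin n) ℝ).PosDef := by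
      rw [hM1]; simpa using Matrix.PosDef.one
    rw [hsplit]
    exact h1.add_posSemidef hrest
  have hPunit : IsUnit P.det := hPdef.det_pos.ne'.isUnit
  have hMinv : ∀ g : G, M g * M g⁻¹ = 1 := by
    intro g; rw [← hMmul, mul_inv_cancel, hM1]
  have htraceinv : ∀ g : G, (M g⁻¹).trace = (M g).trace := by
    intro g
    have key : P * M g⁻¹ = (M g)ᴴ * P := by
      have := hPinv2 g
      calc P * M g⁻¹ = ((M g)ᴴ * P * M g) * M g⁻¹ := by rw [this]
        _ = (M g)ᴴ * P * (M g * M g⁻¹) := by rw [Matrix.mul_assoc]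
        _ = (M g)ᴴ * P := by rw [hMinv g, mul_one]
    calc (M g⁻¹).trace = (P⁻¹ * (P * M g⁻¹)).trace := by
            rw [← Matrix.mul_assoc, Matrix.nonsing_inv_mul P hPunit, Matrix.one_mul]
      _ = (P⁻¹ * ((M g)ᴴ * P)).trace := by rw [key]
      _ = (P * P⁻¹ * (M g)ᴴ).trace := by
            rw [← Matrix.mul_assoc, Matrix.trace_mul_cycle]
      _ = ((M g)ᴴ).trace := by rw [Matrix.mul_nonsing_inv P hPunit, Matrix.one_mul]
      _ = (M g).trace := by simp [Matrix.trace_conjTranspose]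
  -- Step 3: each trace is an algebraic integer
  set f : G → ℂ := fun g => ((M g).trace : ℂ) with hf
  have hfint : ∀ g : G, IsIntegral ℤ (f g) := by
    intro g
    refine trace_isIntegral_of_pow_eq_one (M g) (N := Fintype.card G)
      Fintype.card_ne_zero ?_
    rw [← hMpow, pow_card_eq_one, hM1]
  have hfsym : ∀ g : G, f g⁻¹ = f g := fun g => by
    simp only [hf]; exact_mod_cast congrArg (Complex.ofReal) (htraceinv g)
  -- Step 4: pair up g and g⁻¹ on univ \ {1}
  have hnf : ∀ g ∈ Finset.univ.erase (1 : G), g⁻¹ ≠ g := by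
    intro g hg heq
    have hg1 : g ≠ 1 := (Finset.mem_erase.mp hg).1
    have h2 : g ^ 2 = 1 := by
      rw [pow_two]
      nth_rewrite 1 [← heq]
      exact inv_mul_cancel g
    have hord : orderOf g ∣ 2 := orderOf_dvd_of_pow_eq_one h2
    have hord1 : orderOf g ≠ 1 := by
      intro h; exact hg1 (orderOf_eq_one_iff.mp h)
    have hord2 : orderOf g = 2 :=
      ((Nat.dvd_prime Nat.prime_two).mp hord).resolve_left hord1
    have : (2 : ℕ) ∣ Fintype.card G := hord2 ▸ orderOf_dvd_card
    exact (Nat.not_even_iff_odd.mpr hG) (even_iff_two_dvd.mpr this)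
  have hcl : ∀ g ∈ Finset.univ.erase (1 : G), g⁻¹ ∈ Finset.univ.erase (1 : G) := by
    intro g hg
    refine Finset.mem_erase.mpr ⟨?_, Finset.mem_univ _⟩
    have := (Finset.mem_erase.mp hg).1
    simpa using this
  obtain ⟨c, hc, hcsum⟩ := sum_eq_two_mul_integral f hfsym hfint _ hcl hnf
  -- Step 5: conclude
  have hsumC : (n : ℂ) + 2 * c = 0 := by
    have h0 : ∑ g : G, f g = 0 := by
      simp only [hf, ← Complex.ofReal_sum, htrsum, Complex.ofReal_zero]
    have hsplit : f 1 + ∑ g ∈ Finset.univ.erase (1 : G), f g = ∑ g : G, f g :=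
      Finset.add_sum_erase _ _ (Finset.mem_univ 1)
    have hf1 : f 1 = (n : ℂ) := by
      simp [hf, hM1, Matrix.trace_one]
    rw [hcsum, hf1, h0] at hsplit
    exact hsplit
  have hq : algebraMap ℚ ℂ (-(n : ℚ) / 2) = c := by
    have hc' : c = -(n : ℂ) / 2 := by linear_combination hsumC / 2
    rw [hc', eq_ratCast]
    push_cast
    ring
  have hqint : IsIntegral ℤ ((-(n : ℚ) / 2 : ℚ)) := by
    rw [← isIntegral_algebraMap_iff (algebraMap ℚ ℂ).injective, hq]
    exact hc
  obtain ⟨k, hk⟩ := IsIntegrallyClosed.isIntegral_iff.mp hqint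
  have hk' : ((k : ℚ)) = -(n : ℚ) / 2 := by exact_mod_cast hk
  have hnk : (n : ℚ) = ((-2 * k : ℤ) : ℚ) := by push_cast; linarith
  have hnz : (n : ℤ) = -2 * k := by exact_mod_cast hnk
  have : Even (n : ℤ) := ⟨-k, by omega⟩
  exact Int.even_coe_nat n |>.mp this
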